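/- Let a(t), b(t), c(t) solve a' = a² + bc, b' = b² + ac, c' = c² + ab on [0,T), with a ≤ b ≤ c and S := 2(a+b+c) > 0 throughout. Then (a+b)/S is monotone non-decreasing and c/S is monotone non-increasing in t; indeed ((a+b)/S)' = (2/S²)(a²(c−b) + b²(c−a)) ≥ 0 and (c/S)' = (2/S²)(a²(b−c) + b²(a−c)) ≤ 0. -/

import Mathlib

theorem stmt13 (a b c : ℝ → ℝ) (T : ℝ)
    (ha : ∀ t ∈ Set.Ico (0:ℝ) T, HasDerivAt a ((a t)^2 + b t * c t) t)
    (hb : ∀ t ∈ Set.Ico (0:ℝ) T, HasDerivAt b ((b t)^2 + a t * c t) t)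
    (hc : ∀ t ∈ Set.Ico (0:ℝ) T, HasDerivAt c ((c t)^2 + a t * b t) t)
    (hord : ∀ t ∈ Set.Ico (0:ℝ) T, a t ≤ b t ∧ b t ≤ c t)
    (hS : ∀ t ∈ Set.Ico (0:ℝ) T, 0 < 2 * (a t + b t + c t)) :
    (∀ t ∈ Set.Ico (0:ℝ) T,
      HasDerivAt (fun s => (a s + b s) / (2 * (a s + b s + c s)))
        (2 / (2 * (a t + b t + c t))^2
          * ((a t)^2 * (c t - b t) + (b t)^2 * (c t - a t))) t ∧
      0 ≤ 2 / (2 * (a t + b t + c t))^2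
          * ((a t)^2 * (c t - b t) + (b t)^2 * (c t - a t))) ∧
    (∀ t ∈ Set.Ico (0:ℝ) T,
      HasDerivAt (fun s => c s / (2 * (a s + b s + c s)))
        (2 / (2 * (a t + b t + c t))^2
          * ((a t)^2 * (b t - c t) + (b t)^2 * (a t - c t))) t ∧
      2 / (2 * (a t + b t + c t))^2
          * ((a t)^2 * (b t - c t) + (b t)^2 * (a t - c t)) ≤ 0) ∧
    (∀ s ∈ Set.Ico (0:ℝ) T, ∀ t ∈ Set.Ico (0:ℝ) T, s ≤ t →
      (a s + b s) / (2 * (a s + b s + c s)) ≤ (a t + b t) / (2 * (a t + b t + c t)) ∧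
      c t / (2 * (a t + b t + c t)) ≤ c s / (2 * (a s + b s + c s))) := by
  have key1 : ∀ t ∈ Set.Ico (0:ℝ) T,
      HasDerivAt (fun s => (a s + b s) / (2 * (a s + b s + c s)))
        (2 / (2 * (a t + b t + c t))^2
          * ((a t)^2 * (c t - b t) + (b t)^2 * (c t - a t))) t := by
    intro t ht
    have hvne : 2 * (a t + b t + c t) ≠ 0 := ne_of_gt (hS t ht)
    have hv : HasDerivAt (fun s => 2 * (a s + b s + c s))
        (2 * (((a t)^2 + b t * c t) + ((b t)^2 + a t * c t) + ((c t)^2 + a t * b t))) t :=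
      (((ha t ht).add (hb t ht)).add (hc t ht)).const_mul 2
    have hu : HasDerivAt (fun s => a s + b s)
        (((a t)^2 + b t * c t) + ((b t)^2 + a t * c t)) t := (ha t ht).add (hb t ht)
    have h := hu.div hv hvne
    refine h.congr_deriv ?_
    ring
  have key2 : ∀ t ∈ Set.Ico (0:ℝ) T,
      HasDerivAt (fun s => c s / (2 * (a s + b s + c s)))
        (2 / (2 * (a t + b t + c t))^2
          * ((a t)^2 * (b t - c t) + (b t)^2 * (a t - c t))) t := by
    intro t ht
    have hvne : 2 * (a t + b t + c t) ≠ 0 := ne_of_gt (hS t ht)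
    have hv : HasDerivAt (fun s => 2 * (a s + b s + c s))
        (2 * (((a t)^2 + b t * c t) + ((b t)^2 + a t * c t) + ((c t)^2 + a t * b t))) t :=
      (((ha t ht).add (hb t ht)).add (hc t ht)).const_mul 2
    have h := (hc t ht).div hv hvne
    refine h.congr_deriv ?_
    ring
  have nn1 : ∀ t ∈ Set.Ico (0:ℝ) T,
      0 ≤ 2 / (2 * (a t + b t + c t))^2
          * ((a t)^2 * (c t - b t) + (b t)^2 * (c t - a t)) := by
    intro t ht
    obtain ⟨h1, h2⟩ := hord t ht
    have : (0:ℝ) ≤ (a t)^2 * (c t - b t) + (b t)^2 * (c t - a t) := by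
      have := sq_nonneg (a t); have := sq_nonneg (b t); nlinarith
    have h0 : (0:ℝ) ≤ 2 / (2 * (a t + b t + c t))^2 := by positivity
    exact mul_nonneg h0 this
  have nn2 : ∀ t ∈ Set.Ico (0:ℝ) T,
      2 / (2 * (a t + b t + c t))^2
          * ((a t)^2 * (b t - c t) + (b t)^2 * (a t - c t)) ≤ 0 := by
    intro t ht
    obtain ⟨h1, h2⟩ := hord t ht
    have : (a t)^2 * (b t - c t) + (b t)^2 * (a t - c t) ≤ 0 := by
      have := sq_nonneg (a t); have := sq_nonneg (b t); nlinarith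
    have h0 : (0:ℝ) ≤ 2 / (2 * (a t + b t + c t))^2 := by positivity
    exact mul_nonpos_of_nonneg_of_nonpos h0 this
  refine ⟨fun t ht => ⟨key1 t ht, nn1 t ht⟩, fun t ht => ⟨key2 t ht, nn2 t ht⟩, ?_⟩
  have hsub : Set.Ioo (0:ℝ) T ⊆ Set.Ico (0:ℝ) T := Set.Ioo_subset_Ico_self
  have hint : interior (Set.Ico (0:ℝ) T) = Set.Ioo 0 T := interior_Ico
  have hmono : MonotoneOn (fun s => (a s + b s) / (2 * (a s + b s + c s)))
      (Set.Ico (0:ℝ) T) := by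
    apply monotoneOn_of_deriv_nonneg (convex_Ico 0 T)
    · exact fun t ht => (key1 t ht).continuousAt.continuousWithinAt
    · rw [hint]
      exact fun t ht => (key1 t (hsub ht)).differentiableAt.differentiableWithinAt
    · rw [hint]
      intro t ht
      rw [(key1 t (hsub ht)).deriv]
      exact nn1 t (hsub ht)
  have hanti : AntitoneOn (fun s => c s / (2 * (a s + b s + c s)))
      (Set.Ico (0:ℝ) T) := by
    apply antitoneOn_of_deriv_nonpos (convex_Ico 0 T)
    · exact fun t ht => (key2 t ht).continuousAt.continuousWithinAt
    · rw [hint]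
      exact fun t ht => (key2 t (hsub ht)).differentiableAt.differentiableWithinAt
    · rw [hint]
      intro t ht
      rw [(key2 t (hsub ht)).deriv]
      exact nn2 t (hsub ht)
  exact fun s hs t ht hst => ⟨hmono hs ht hst, hanti hs ht hst⟩
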